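/- Let f : (C•, F) → (D•, F) be a morphism of filtered cochain complexes of modules over a ring A, where F on C• is complete and exhaustive and F on D• is finite in each degree. If f induces quasi-isomorphisms gr_F^i C• → gr_F^i D• for all i and f itself is a quasi-isomorphism on underlying complexes, then f is a filtered quasi-isomorphism, i.e., F^i C• → F^i D• is a quasi-isomorphism for all i — give a counterexample showing that the graded quasi-isomorphism condition alone (without the underlying quasi-isomorphism) does not suffice when F on C• is not finite. -/

import Mathlib

open Polynomial in
noncomputable def ctD (q : ℤ) : Polynomial ℚ →ₗ[ℚ] Polynomial ℚ :=
  if q = 0 then LinearMap.mulLeft ℚ (1 - X) else if Even q then LinearMap.id else 0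

noncomputable def ctG (i : ℤ) : Submodule ℚ (Polynomial ℚ) :=
  (Ideal.span {(Polynomial.X : Polynomial ℚ) ^ i.toNat}).restrictScalars ℚ

lemma ctG_mem {i : ℤ} {p : Polynomial ℚ} :
    p ∈ ctG i ↔ (Polynomial.X : Polynomial ℚ) ^ i.toNat ∣ p := by
  simp [ctG, Ideal.mem_span_singleton]

lemma ctG_anti {i j : ℤ} (h : i ≤ j) : ctG j ≤ ctG i := by
  intro p hp
  rw [ctG_mem] at hp ⊢
  exact dvd_trans (pow_dvd_pow _ (by omega)) hp

lemma ctG_top : ctG 0 = ⊤ := by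
  simp [ctG, Ideal.span_singleton_one]

lemma ctD_zero_eq : ctD 0 = LinearMap.mulLeft ℚ (1 - Polynomial.X) := by
  simp [ctD]

lemma ctD_dd (q : ℤ) (x : Polynomial ℚ) : ctD (q + 1) (ctD q x) = 0 := by
  rcases Int.even_or_odd q with he | ho
  · have h1 : (q + 1 : ℤ) ≠ 0 := by
      intro h
      rw [show q = -1 by omega] at he
      exact (by decide : ¬ Even (-1 : ℤ)) he
    have h2 : ¬ Even (q + 1) := by simp [Int.even_add_one, he]
    simp [ctD, h1, h2]
  · have h3 : q ≠ 0 := by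
      intro h; rw [h] at ho; exact (by decide : ¬ Odd (0 : ℤ)) ho
    have h4 : ¬ Even q := Int.not_even_iff_odd.mpr ho
    have hz : ctD q x = 0 := by simp [ctD, h3, h4]
    rw [hz, map_zero]

lemma ctD_mem {i : ℤ} (q : ℤ) {x : Polynomial ℚ} (hx : x ∈ ctG i) : ctD q x ∈ ctG i := by
  unfold ctD
  split_ifs with h h'
  · rw [LinearMap.mulLeft_apply]
    rw [ctG_mem] at hx ⊢
    exact hx.mul_left _
  · exact hx
  · exact zero_mem _

lemma ctG_sep {p : Polynomial ℚ} (h : ∀ i : ℤ, p ∈ ctG i) : p = 0 := by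
  by_contra hne
  have h1 := ctG_mem.mp (h ((p.natDegree : ℤ) + 1))
  have ht : ((p.natDegree : ℤ) + 1).toNat = p.natDegree + 1 := by omega
  rw [ht] at h1
  have h2 := Polynomial.natDegree_le_of_dvd h1 hne
  rw [Polynomial.natDegree_X_pow] at h2
  omega

lemma ctD_gr (i q : ℤ) {x : Polynomial ℚ} (hx : x ∈ ctG i)
    (hdx : ctD (q + 1) x ∈ ctG (i + 1)) :
    ∃ a ∈ ctG i, x - ctD q a ∈ ctG (i + 1) := by
  rcases Int.even_or_odd q with he | ho
  · rcases eq_or_ne q 0 with rfl | hq0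
    · refine ⟨x, hx, ?_⟩
      rw [ctD_zero_eq, LinearMap.mulLeft_apply]
      rw [ctG_mem] at hx ⊢
      obtain ⟨u, hu⟩ := hx
      have he2 : x - (1 - Polynomial.X) * x
          = Polynomial.X ^ (i.toNat + 1) * u := by rw [hu]; ring
      rw [he2]
      exact Dvd.dvd.mul_right (pow_dvd_pow _ (by omega)) u
    · refine ⟨x, hx, ?_⟩
      have hid : ctD q x = x := by simp [ctD, hq0, he]
      rw [hid, sub_self]
      exact zero_mem _
  · have h3 : q ≠ 0 := by
      intro h; rw [h] at ho; exact (by decide : ¬ Odd (0 : ℤ)) ho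
    have h4 : ¬ Even q := Int.not_even_iff_odd.mpr ho
    refine ⟨0, zero_mem _, ?_⟩
    rw [map_zero, sub_zero]
    rcases eq_or_ne (q + 1) 0 with hq1 | hq1
    · rw [show ctD (q + 1) = LinearMap.mulLeft ℚ (1 - Polynomial.X) from by
        rw [hq1, ctD_zero_eq], LinearMap.mulLeft_apply] at hdx
      rw [ctG_mem] at hdx ⊢
      have hcop : IsCoprime ((Polynomial.X : Polynomial ℚ) ^ (i + 1).toNat)
          (1 - Polynomial.X) :=
        IsCoprime.pow_left ⟨1, 1, by ring⟩
      exact hcop.dvd_of_dvd_mul_left hdx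
    · have heq : ctD (q + 1) x = x := by
        have hev : Even (q + 1) := Int.even_add_one.mpr h4
        simp [ctD, hq1, hev]
      rwa [heq] at hdx

lemma ctD_one_eq : ctD (0 + 1 : ℤ) = 0 := by
  have h1 : (0 + 1 : ℤ) ≠ 0 := by norm_num
  have h2 : ¬ Even (0 + 1 : ℤ) := by decide
  simp [ctD, h1, h2]

lemma ctD_zero_ne_one (b : Polynomial ℚ) : ctD 0 b ≠ 1 := by
  rw [ctD_zero_eq, LinearMap.mulLeft_apply]
  intro hb
  have := congrArg (Polynomial.eval 1) hb
  simp at this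

noncomputable def ctD' (q : ℤ) :
    ULift.{u} (Polynomial ℚ) →ₗ[ℚ] ULift.{u} (Polynomial ℚ) :=
  (ULift.moduleEquiv.symm.toLinearMap.comp (ctD q)).comp ULift.moduleEquiv.toLinearMap

lemma ctD'_down (q : ℤ) (x : ULift.{u} (Polynomial ℚ)) :
    (ctD' q x).down = ctD q x.down := rfl

noncomputable def ctG' (i : ℤ) : Submodule ℚ (ULift.{u} (Polynomial ℚ)) :=
  (ctG i).comap ULift.moduleEquiv.toLinearMap

lemma ctG'_mem {i : ℤ} {x : ULift.{u} (Polynomial ℚ)} : x ∈ ctG' i ↔ x.down ∈ ctG i :=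
  Iff.rfl

lemma ctD'_one (x : ULift.{u} (Polynomial ℚ)) : ctD' (0 + 1 : ℤ) x = 0 := by
  refine ULift.down_inj.mp ?_
  rw [ctD'_down, ctD_one_eq]
  rfl

/-- Let `f : (C•, F) → (D•, F)` be a morphism of filtered cochain complexes of
`A`-modules, where `F` on `C•` is a decreasing, separated (complete) and exhaustive
filtration by subcomplexes and `F` on `D•` is finite in each degree.  If `f` induces
quasi-isomorphisms `gr_F^i C• → gr_F^i D•` for all `i` and `f` itself is a
quasi-isomorphism on the underlying complexes, then `f` is a filtered
quasi-isomorphism (each `F^i C• → F^i D•` is a quasi-isomorphism).  Moreover the graded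
condition alone does not suffice when the filtration is not finite: there is a complex
`C•` with a decreasing, separated and exhaustive filtration by subcomplexes, all of
whose graded pieces are acyclic, while `C•` itself is not acyclic (so `f : C• → 0` is a
`gr`-quasi-isomorphism but not a quasi-isomorphism). -/
theorem filtered_quasiIso_and_counterexample
    (A : Type*) [CommRing A]
    (C D : ℤ → Type*)
    [∀ q, AddCommGroup (C q)] [∀ q, Module A (C q)]
    [∀ q, AddCommGroup (D q)] [∀ q, Module A (D q)]
    (dC : ∀ q : ℤ, C q →ₗ[A] C (q + 1)) (dD : ∀ q : ℤ, D q →ₗ[A] D (q + 1))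
    (hdC : ∀ q x, dC (q + 1) (dC q x) = 0) (hdD : ∀ q x, dD (q + 1) (dD q x) = 0)
    (FC : ℤ → ∀ q : ℤ, Submodule A (C q)) (FD : ℤ → ∀ q : ℤ, Submodule A (D q))
    (hFCmono : ∀ i q, FC (i + 1) q ≤ FC i q) (hFDmono : ∀ i q, FD (i + 1) q ≤ FD i q)
    (hFCsub : ∀ i q, ∀ x ∈ FC i q, dC q x ∈ FC i (q + 1))
    (hFDsub : ∀ i q, ∀ x ∈ FD i q, dD q x ∈ FD i (q + 1))
    -- `F` on `C` is separated (complete) and exhaustive: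
    (hFCcomplete : ∀ q, ⨅ i : ℤ, FC i q = ⊥) (hFCexh : ∀ q, ⨆ i : ℤ, FC i q = ⊤)
    -- `F` on `D` is finite in each degree:
    (hFDfin : ∀ q, (∃ a : ℤ, FD a q = ⊤) ∧ ∃ b : ℤ, FD b q = ⊥)
    (f : ∀ q : ℤ, C q →ₗ[A] D q)
    (hf : ∀ q x, f (q + 1) (dC q x) = dD q (f q x))
    (hffilt : ∀ i q, ∀ x ∈ FC i q, f q x ∈ FD i q)
    -- `f` induces quasi-isomorphisms on all graded pieces:
    (hgrinj : ∀ (i q : ℤ), ∀ x ∈ FC i (q + 1),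
      dC (q + 1) x ∈ FC (i + 1) (q + 1 + 1) →
      (∃ b ∈ FD i q, f (q + 1) x - dD q b ∈ FD (i + 1) (q + 1)) →
      ∃ a ∈ FC i q, x - dC q a ∈ FC (i + 1) (q + 1))
    (hgrsurj : ∀ (i q : ℤ), ∀ y ∈ FD i (q + 1),
      dD (q + 1) y ∈ FD (i + 1) (q + 1 + 1) →
      ∃ x ∈ FC i (q + 1), dC (q + 1) x ∈ FC (i + 1) (q + 1 + 1) ∧
        ∃ b ∈ FD i q, y - f (q + 1) x - dD q b ∈ FD (i + 1) (q + 1))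
    -- and `f` is a quasi-isomorphism on underlying complexes:
    (hqinj : ∀ (q : ℤ) (x : C (q + 1)), dC (q + 1) x = 0 →
      (∃ b : D q, dD q b = f (q + 1) x) → ∃ a : C q, dC q a = x)
    (hqsurj : ∀ (q : ℤ) (y : D (q + 1)), dD (q + 1) y = 0 →
      ∃ x : C (q + 1), dC (q + 1) x = 0 ∧ ∃ b : D q, y - f (q + 1) x = dD q b) :
    -- conclusion 1: `f` is a filtered quasi-isomorphism:
    ((∀ (i q : ℤ), ∀ x ∈ FC i (q + 1), dC (q + 1) x = 0 →
        (∃ b ∈ FD i q, dD q b = f (q + 1) x) → ∃ a ∈ FC i q, dC q a = x) ∧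
      (∀ (i q : ℤ), ∀ y ∈ FD i (q + 1), dD (q + 1) y = 0 →
        ∃ x ∈ FC i (q + 1), dC (q + 1) x = 0 ∧ ∃ b ∈ FD i q, y - f (q + 1) x = dD q b)) ∧
    -- conclusion 2 (counterexample): the graded condition alone does not suffice for
    -- non-finite filtrations:
    (∃ (E : ℤ → ModuleCat ℚ) (dE : ∀ q : ℤ, E q ⟶ E (q + 1))
        (G : ℤ → ∀ q : ℤ, Submodule ℚ (E q)),
      (∀ q (x : E q), dE (q + 1) (dE q x) = 0) ∧
      (∀ i q, G (i + 1) q ≤ G i q) ∧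
      (∀ i q, ∀ x ∈ G i q, dE q x ∈ G i (q + 1)) ∧
      (∀ q, ⨅ i : ℤ, G i q = ⊥) ∧
      (∀ q, ⨆ i : ℤ, G i q = ⊤) ∧
      -- all graded pieces are acyclic:
      (∀ (i q : ℤ), ∀ x ∈ G i (q + 1), dE (q + 1) x ∈ G (i + 1) (q + 1 + 1) →
        ∃ a ∈ G i q, x - dE q a ∈ G (i + 1) (q + 1)) ∧
      -- but the complex is not acyclic:
      ∃ (q : ℤ) (x : E (q + 1)), dE (q + 1) x = 0 ∧ ∀ a : E q, dE q a ≠ x) := by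
  constructor
  · -- Part 1: `f` is a filtered quasi-isomorphism.
    have hCanti : ∀ i j : ℤ, i ≤ j → ∀ q, FC j q ≤ FC i q := by
      intro i j hij
      refine Int.le_induction (motive := fun j _ => ∀ q, FC j q ≤ FC i q) ?_ ?_ j hij
      · intro q; exact le_rfl
      · intro k hk ih q; exact (hFCmono k q).trans (ih q)
    have hDanti : ∀ i j : ℤ, i ≤ j → ∀ q, FD j q ≤ FD i q := by
      intro i j hij
      refine Int.le_induction (motive := fun j _ => ∀ q, FD j q ≤ FD i q) ?_ ?_ j hij
      · intro q; exact le_rfl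
      · intro k hk ih q; exact (hFDmono k q).trans (ih q)
    -- the mapping cone of `f` is acyclic (underlying complexes)
    have UL : ∀ (q : ℤ) (x : C (q+1+1)) (y : D (q+1)), dC (q+1+1) x = 0 →
        f (q+1+1) x = dD (q+1) y →
        ∃ a : C (q+1), dC (q+1) a = x ∧ ∃ e : D q, f (q+1) a - dD q e = y := by
      intro q x y hx hxy
      obtain ⟨a₁, ha₁⟩ := hqinj (q+1) x hx ⟨y, hxy.symm⟩
      have hy' : dD (q+1) (y - f (q+1) a₁) = 0 := by
        rw [map_sub, ← hxy, ← hf (q+1) a₁, ha₁, sub_self]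
      obtain ⟨x', hdx', b, hb⟩ := hqsurj q (y - f (q+1) a₁) hy'
      refine ⟨a₁ + x', by rw [map_add, ha₁, hdx', add_zero], -b, ?_⟩
      rw [map_add, map_neg, sub_neg_eq_add, ← hb]
      abel
    -- the mapping cone of `gr f` is acyclic
    have GR : ∀ (i q : ℤ), ∀ x ∈ FC i (q+1+1), ∀ y ∈ FD i (q+1),
        dC (q+1+1) x ∈ FC (i+1) (q+1+1+1) →
        f (q+1+1) x - dD (q+1) y ∈ FD (i+1) (q+1+1) →
        ∃ a ∈ FC i (q+1), x - dC (q+1) a ∈ FC (i+1) (q+1+1) ∧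
          ∃ e ∈ FD i q, y - f (q+1) a - dD q e ∈ FD (i+1) (q+1) := by
      intro i q x hx y hy hdx hfy
      obtain ⟨a, ha, hxa⟩ := hgrinj i (q+1) x hx hdx ⟨y, hy, hfy⟩
      have h1 : y - f (q+1) a ∈ FD i (q+1) := sub_mem hy (hffilt i (q+1) a ha)
      have h2 : dD (q+1) (y - f (q+1) a) ∈ FD (i+1) (q+1+1) := by
        have e1 : dD (q+1) (y - f (q+1) a)
            = -(f (q+1+1) x - dD (q+1) y) + f (q+1+1) (x - dC (q+1) a) := by
          simp only [map_sub]
          rw [hf (q+1) a]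
          abel
        rw [e1]
        exact add_mem (neg_mem hfy) (hffilt (i+1) (q+1+1) _ hxa)
      obtain ⟨x₂, hx₂, hdx₂, b, hb, hyb⟩ := hgrsurj i q (y - f (q+1) a) h1 h2
      refine ⟨a + x₂, add_mem ha hx₂, ?_, b, hb, ?_⟩
      · have e2 : x - dC (q+1) (a + x₂) = (x - dC (q+1) a) - dC (q+1) x₂ := by
          rw [map_add]; abel
        rw [e2]
        exact sub_mem hxa hdx₂
      · have e3 : y - f (q+1) (a + x₂) - dD q b
            = y - f (q+1) a - f (q+1) x₂ - dD q b := by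
          rw [map_add]; abel
        rw [e3]
        exact hyb
    -- the mapping cone of `F^i f` is acyclic
    have ML : ∀ (i q : ℤ), ∀ x ∈ FC i (q+1+1), ∀ y ∈ FD i (q+1),
        dC (q+1+1) x = 0 → f (q+1+1) x = dD (q+1) y →
        ∃ a ∈ FC i (q+1), dC (q+1) a = x ∧ ∃ e ∈ FD i q, f (q+1) a - dD q e = y := by
      intro i q x hx y hy hdx hfx
      obtain ⟨p, rfl⟩ : ∃ p : ℤ, q = p + 1 := ⟨q - 1, by omega⟩
      obtain ⟨a₀, hda₀, e₀, hfe₀⟩ := UL (p+1) x y hdx hfx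
      obtain ⟨jc, hjc⟩ : ∃ k, a₀ ∈ FC k (p+1+1) := by
        have hdir : Directed (· ≤ ·) (fun k : ℤ => FC k (p+1+1)) := fun k l =>
          ⟨min k l, hCanti _ k (min_le_left k l) _, hCanti _ l (min_le_right k l) _⟩
        exact (Submodule.mem_iSup_of_directed _ hdir).mp
          (by rw [hFCexh]; exact Submodule.mem_top)
      obtain ⟨jd, hjd⟩ := (hFDfin (p+1)).1
      have he₀ : e₀ ∈ FD jd (p+1) := by rw [hjd]; exact Submodule.mem_top
      obtain ⟨j, hji, hjc', hjd'⟩ : ∃ j : ℤ, j ≤ i ∧ j ≤ jc ∧ j ≤ jd :=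
        ⟨min i (min jc jd), by omega, by omega, by omega⟩
      have hP0 : ∃ a ∈ FC j (p+1+1), dC (p+1+1) a = x ∧
          ∃ e ∈ FD j (p+1), f (p+1+1) a - dD (p+1) e = y :=
        ⟨a₀, hCanti j jc hjc' _ hjc, hda₀, e₀, hDanti j jd hjd' _ he₀, hfe₀⟩
      have step : ∀ k : ℤ, k + 1 ≤ i →
          (∃ a ∈ FC k (p+1+1), dC (p+1+1) a = x ∧
            ∃ e ∈ FD k (p+1), f (p+1+1) a - dD (p+1) e = y) →
          (∃ a ∈ FC (k+1) (p+1+1), dC (p+1+1) a = x ∧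
            ∃ e ∈ FD (k+1) (p+1), f (p+1+1) a - dD (p+1) e = y) := by
        rintro k hk ⟨a, ha, hda, e, he, hfe⟩
        have hdCa : dC (p+1+1) a ∈ FC (k+1) (p+1+1+1) := by
          rw [hda]; exact hCanti (k+1) i hk _ hx
        have hfda : f (p+1+1) a - dD (p+1) e ∈ FD (k+1) (p+1+1) := by
          rw [hfe]; exact hDanti (k+1) i hk _ hy
        obtain ⟨a', ha', haa', e', he', hee'⟩ := GR k p a ha e he hdCa hfda
        refine ⟨a - dC (p+1) a', haa', ?_, e - f (p+1) a' - dD p e', hee', ?_⟩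
        · rw [map_sub, hda, hdC (p+1) a', sub_zero]
        · have h0 := hdD p e'
          calc f (p+1+1) (a - dC (p+1) a') - dD (p+1) (e - f (p+1) a' - dD p e')
              = (f (p+1+1) a - dD (p+1) e)
                - (f (p+1+1) (dC (p+1) a') - dD (p+1) (f (p+1) a'))
                + dD (p+1) (dD p e') := by simp only [map_sub]; abel
            _ = y := by rw [hf (p+1) a', h0, hfe]; abel
      have climb : ∀ (n : ℕ) (k : ℤ), k ≤ i → i ≤ k + (n : ℤ) →
          (∃ a ∈ FC k (p+1+1), dC (p+1+1) a = x ∧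
            ∃ e ∈ FD k (p+1), f (p+1+1) a - dD (p+1) e = y) →
          ∃ a ∈ FC i (p+1+1), dC (p+1+1) a = x ∧
            ∃ e ∈ FD i (p+1), f (p+1+1) a - dD (p+1) e = y := by
        intro n
        induction n with
        | zero =>
          intro k h1 h2 hp
          have hk : k = i := by omega
          exact hk ▸ hp
        | succ n ih =>
          intro k h1 h2 hp
          rcases eq_or_lt_of_le h1 with rfl | h
          · exact hp
          · exact ih (k+1) (by omega) (by push_cast at h2 ⊢; omega) (step k (by omega) hp)
      exact climb (i - j).toNat j hji (by omega) hP0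
    constructor
    · rintro i q x hx hdx ⟨b, hb, hdb⟩
      obtain ⟨p, rfl⟩ : ∃ p : ℤ, q = p + 1 := ⟨q - 1, by omega⟩
      obtain ⟨a, ha, hda, -⟩ := ML i p x hx b hb hdx hdb.symm
      exact ⟨a, ha, hda⟩
    · intro i q y hy hdy
      obtain ⟨a, ha, hda, e, he, hfe⟩ :=
        ML i q 0 (zero_mem _) y hy (map_zero _) (by rw [map_zero, hdy])
      exact ⟨a, ha, hda, -e, neg_mem he, by rw [map_neg, ← hfe]; abel⟩
  · -- Part 2: the counterexample.
    refine ⟨fun _ => ModuleCat.of ℚ (ULift (Polynomial ℚ)),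
      fun q => ModuleCat.ofHom (ctD' q), fun i _ => ctG' i, ?_, ?_, ?_, ?_, ?_, ?_, ?_⟩
    · intro q x
      show ctD' (q + 1) (ctD' q x) = 0
      refine ULift.down_inj.mp ?_
      rw [ctD'_down, ctD'_down]
      exact ctD_dd q x.down
    · intro i q x hx
      exact ctG'_mem.mpr (ctG_anti (by omega) (ctG'_mem.mp hx))
    · intro i q x hx
      show ctD' q x ∈ ctG' i
      rw [ctG'_mem, ctD'_down]
      exact ctD_mem q (ctG'_mem.mp hx)
    · intro q
      rw [eq_bot_iff]
      intro x hx
      simp only [Submodule.mem_iInf] at hx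
      rw [Submodule.mem_bot]
      refine ULift.down_inj.mp ?_
      exact ctG_sep (fun i => ctG'_mem.mp (hx i))
    · intro q
      rw [eq_top_iff]
      intro x _
      refine Submodule.mem_iSup_of_mem 0 ?_
      rw [ctG'_mem, ctG_top]
      trivial
    · intro i q x hx hdx
      have hdx' : ctD (q + 1) x.down ∈ ctG (i + 1) := by
        rw [← ctD'_down]
        exact ctG'_mem.mp hdx
      obtain ⟨a, ha, h2⟩ := ctD_gr i q (ctG'_mem.mp hx) hdx'
      refine ⟨ULift.up a, ctG'_mem.mpr ha, ?_⟩
      exact h2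
    · refine ⟨0, ULift.up 1, ?_, ?_⟩
      · exact ctD'_one (ULift.up 1)
      · intro a h
        exact ctD_zero_ne_one (ULift.down a) (congrArg ULift.down h)
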